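/- For the sampling without replacement urn with n white and m black balls (at each step a white ball is removed with probability (number white)/(number white + number black), else a black ball is removed, until one color is exhausted), the probability that exactly k white balls remain when all black balls have been removed equals C(n+m-1-k, m-1)/C(n+m, n), for 0 ≤ k ≤ n. -/

import Mathlib

/-- Sampling without replacement: probability that `k` white balls remain
when all black balls have been drawn. -/
theorem sampling_without_replacement (P : ℕ → ℕ → ℕ → ℝ)
    (hPrec : ∀ n m k, 1 ≤ n → 1 ≤ m →
      P n m k = ((n : ℝ) / (n + m)) * P (n - 1) m k +
        ((m : ℝ) / (n + m)) * P n (m - 1) k)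
    (hP0 : ∀ n k, P n 0 k = if k = n then 1 else 0)
    (hP0' : ∀ m k, 1 ≤ m → P 0 m k = if k = 0 then 1 else 0) :
    ∀ n m k, 1 ≤ n → 1 ≤ m → k ≤ n →
      P n m k = ((n + m - 1 - k).choose (m - 1) : ℝ) / ((n + m).choose n) := by
  -- First: P n m k = 0 whenever n < k.
  have hzero : ∀ N n m k, n + m = N → n < k → P n m k = 0 := by
    intro N
    induction N using Nat.strong_induction_on with
    | _ N ih =>
      intro n m k hN hk
      match n, m with
      | n, 0 =>
        rw [hP0]
        simp [show k ≠ n by omega]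
      | 0, m + 1 =>
        rw [hP0' _ _ (by omega)]
        simp [show k ≠ 0 by omega]
      | n + 1, m + 1 =>
        rw [hPrec _ _ _ (by omega) (by omega)]
        simp only [Nat.add_sub_cancel]
        rw [ih (n + (m + 1)) (by omega) n (m + 1) k rfl (by omega),
          ih ((n + 1) + m) (by omega) (n + 1) m k rfl (by omega)]
        ring
  -- Main claim, strong induction on n + m, allowing n = 0.
  have key : ∀ N n m k, n + m = N → 1 ≤ m → k ≤ n →
      P n m k = ((n + m - 1 - k).choose (m - 1) : ℝ) / ((n + m).choose n) := by
    intro N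
    induction N using Nat.strong_induction_on with
    | _ N ih =>
      intro n m k hN hm hk
      rcases Nat.eq_zero_or_pos n with hn | hn
      · subst hn
        have hk0 : k = 0 := by omega
        subst hk0
        rw [hP0' m 0 hm]
        simp [Nat.choose_self, show 0 + m - 1 - 0 = m - 1 by omega]
      · -- n = a+1, m = b+1
        obtain ⟨a, rfl⟩ : ∃ a, n = a + 1 := ⟨n - 1, by omega⟩
        obtain ⟨b, rfl⟩ : ∃ b, m = b + 1 := ⟨m - 1, by omega⟩
        rw [hPrec _ _ _ (by omega) (by omega)]
        simp only [Nat.add_sub_cancel]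
        -- useful positivity facts
        have hC : (0:ℝ) < ((a + 1 + (b + 1)).choose (a + 1) : ℝ) := by
          exact_mod_cast Nat.choose_pos (by omega)
        have hC2 : (0:ℝ) < ((a + b + 1).choose (a + 1) : ℝ) := by
          exact_mod_cast Nat.choose_pos (by omega)
        have hC1 : (0:ℝ) < ((a + b + 1).choose a : ℝ) := by
          exact_mod_cast Nat.choose_pos (by omega)
        -- ratio identities
        have hnat1 : (a + 1) * ((a + 1 + (b + 1)).choose (a + 1)) =
            (a + 1 + (b + 1)) * ((a + b + 1).choose a) := by
          have h := Nat.add_one_mul_choose_eq (a + b + 1) a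
          have e : a + 1 + (b + 1) = a + b + 1 + 1 := by omega
          rw [e, mul_comm]
          exact h.symm
        have hnat2 : (b + 1) * ((a + 1 + (b + 1)).choose (a + 1)) =
            (a + 1 + (b + 1)) * ((a + b + 1).choose (a + 1)) := by
          have h1 : (a + 1 + (b + 1)).choose (a + 1) = (a + 1 + (b + 1)).choose (b + 1) :=
            Nat.choose_symm_of_eq_add (by omega)
          have h3 : (a + b + 1).choose (a + 1) = (a + b + 1).choose b :=
            Nat.choose_symm_of_eq_add (by omega)
          have h := Nat.add_one_mul_choose_eq (a + b + 1) b
          have e : a + 1 + (b + 1) = a + b + 1 + 1 := by omega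
          rw [h1, h3, e, mul_comm]
          exact h.symm
        have hsum : ((a + 1 : ℕ) : ℝ) + ((b + 1 : ℕ) : ℝ) = ((a + 1 + (b + 1) : ℕ) : ℝ) := by
          push_cast; ring
        have idn : ((a + 1 : ℕ) : ℝ) / ((a + 1 + (b + 1) : ℕ) : ℝ) =
            ((a + b + 1).choose a : ℝ) / ((a + 1 + (b + 1)).choose (a + 1) : ℝ) := by
          rw [div_eq_div_iff (by positivity) (ne_of_gt hC)]
          exact_mod_cast hnat1.trans (Nat.mul_comm _ _)
        have idm : ((b + 1 : ℕ) : ℝ) / ((a + 1 + (b + 1) : ℕ) : ℝ) =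
            ((a + b + 1).choose (a + 1) : ℝ) / ((a + 1 + (b + 1)).choose (a + 1) : ℝ) := by
          rw [div_eq_div_iff (by positivity) (ne_of_gt hC)]
          exact_mod_cast hnat2.trans (Nat.mul_comm _ _)
        rcases eq_or_lt_of_le hk with hkn | hkn
        · -- k = a + 1
          subst hkn
          rw [hzero (a + (b + 1)) a (b + 1) (a + 1) rfl (by omega)]
          have hPn : P (a + 1) b (a + 1) = 1 / ((a + b + 1).choose (a + 1) : ℝ) := by
            rcases Nat.eq_zero_or_pos b with hb | hb
            · subst hb
              rw [hP0]
              simp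
            · rw [ih (a + 1 + b) (by omega) (a + 1) b (a + 1) rfl hb le_rfl]
              have e1 : a + 1 + b - 1 - (a + 1) = b - 1 := by omega
              have e2 : a + 1 + b = a + b + 1 := by omega
              rw [e1, e2, Nat.choose_self]
              norm_num
          rw [hPn, hsum, idm]
          have e2 : a + 1 + (b + 1) - 1 - (a + 1) = b := by omega
          rw [e2, Nat.choose_self]
          field_simp
          ring
        · -- k ≤ a
          have hka : k ≤ a := by omega
          have hPa : P a (b + 1) k =
              ((a + b - k).choose b : ℝ) / ((a + b + 1).choose a : ℝ) := by
            rw [ih (a + (b + 1)) (by omega) a (b + 1) k rfl (by omega) hka]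
            have e1 : a + (b + 1) - 1 - k = a + b - k := by omega
            have e2 : a + (b + 1) = a + b + 1 := by omega
            rw [e1, e2]
            simp
          rw [hPa]
          rcases Nat.eq_zero_or_pos b with hb | hb
          · subst hb
            rw [hP0]
            simp only [show k ≠ a + 1 by omega, if_false]
            rw [hsum, idn]
            have e1 : a + 0 - k = a - k := by omega
            have e2 : a + 1 + (0 + 1) - 1 - k = a + 1 - k := by omega
            rw [e1, e2]
            simp only [Nat.choose_zero_right]
            field_simp
            ring
          · have hPb : P (a + 1) b k =
                ((a + b - k).choose (b - 1) : ℝ) / ((a + b + 1).choose (a + 1) : ℝ) := by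
              rw [ih (a + 1 + b) (by omega) (a + 1) b k rfl hb (by omega)]
              have e1 : a + 1 + b - 1 - k = a + b - k := by omega
              have e2 : a + 1 + b = a + b + 1 := by omega
              rw [e1, e2]
            rw [hPb, hsum, idn, idm]
            obtain ⟨c, rfl⟩ : ∃ c, b = c + 1 := ⟨b - 1, by omega⟩
            have pascal : (a + (c + 1) - k).choose c + (a + (c + 1) - k).choose (c + 1)
                = (a + 1 + (c + 1 + 1) - 1 - k).choose (c + 1) := by
              have e3 : a + 1 + (c + 1 + 1) - 1 - k = (a + (c + 1) - k) + 1 := by omega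
              rw [e3, Nat.choose_succ_succ]
            have e4 : c + 1 - 1 = c := by omega
            rw [e4]
            have aux : ∀ x y z : ℝ, x ≠ 0 → x / z * (y / x) = y / z := by
              intro x y z hx
              rw [div_mul_div_comm, mul_comm z x]
              exact mul_div_mul_left _ _ hx
            rw [aux _ _ _ (ne_of_gt hC1), aux _ _ _ (ne_of_gt hC2), ← add_div]
            congr 1
            rw [add_comm]
            exact_mod_cast congrArg (Nat.cast : ℕ → ℝ) pascal
  intro n m k hn hm hk
  exact key (n + m) n m k rfl hm hk
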